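/- Let g₃ > 0, g₂, g₁ be real numbers with g₃ − g₂ + g₁ − 1 = 0 (i.e. −1 is a root of p(s) = g₃s³ + g₂s² + g₁s + 1). Then p factors as g₃(s+1)(s² + ((g₂−g₃)/g₃)s + 1/g₃), and if the quadratic factor has non-real roots a ± ib, then (a + 1/g₂)² + b² = (1/g₂)² + 1/g₂ (assuming g₂ ≠ 0). -/

import Mathlib

/-- If `-1` is a root of `p(s) = g₃s³ + g₂s² + g₁s + 1` (`g₃ > 0`), then `p`
factors as `g₃(s+1)(s² + ((g₂−g₃)/g₃)s + 1/g₃)`, and if the quadratic factor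
has non-real roots `a ± ib`, then `(a + 1/g₂)² + b² = (1/g₂)² + 1/g₂`. -/
theorem cubic_no_interior_points (g₃ g₂ g₁ : ℝ) (hg₃ : 0 < g₃) (hg₂ : g₂ ≠ 0)
    (hroot : g₃ - g₂ + g₁ - 1 = 0) :
    (∀ s : ℂ, (g₃ : ℂ) * s ^ 3 + (g₂ : ℂ) * s ^ 2 + (g₁ : ℂ) * s + 1 =
        (g₃ : ℂ) * (s + 1) *
          (s ^ 2 + (((g₂ - g₃) / g₃ : ℝ) : ℂ) * s + 1 / (g₃ : ℂ))) ∧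
    (∀ a b : ℝ, b ≠ 0 →
      ((a : ℂ) + (b : ℂ) * Complex.I) ^ 2 +
          (((g₂ - g₃) / g₃ : ℝ) : ℂ) * ((a : ℂ) + (b : ℂ) * Complex.I) +
          1 / (g₃ : ℂ) = 0 →
      (a + 1 / g₂) ^ 2 + b ^ 2 = (1 / g₂) ^ 2 + 1 / g₂) := by
  have hg₃' : g₃ ≠ 0 := ne_of_gt hg₃
  have hg₃c : (g₃ : ℂ) ≠ 0 := by exact_mod_cast hg₃'
  have hg₁ : g₁ = 1 + g₂ - g₃ := by linarith
  constructor
  · intro s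
    subst hg₁
    push_cast
    field_simp
    ring
  · intro a b hb heq
    -- take real and imaginary parts
    have hre := congrArg Complex.re heq
    have him := congrArg Complex.im heq
    simp [Complex.add_re, Complex.add_im, Complex.mul_re, Complex.mul_im,
      Complex.div_re, Complex.div_im, Complex.ofReal_re, Complex.ofReal_im,
      pow_two, Complex.normSq] at hre him
    -- from im part: a = -(g₂-g₃)/g₃/2
    set c := (g₂ - g₃) / g₃ with hc
    have hck : (g₂ - g₃) * g₃ / (g₃ * g₃) = c := by rw [hc, ← div_div, mul_div_cancel_right₀ _ hg₃']
    rw [hck] at hre him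
    have h0 : b * (2 * a + c) = 0 := by linear_combination him
    have ha : 2 * a + c = 0 := (mul_eq_zero.mp h0).resolve_left hb
    have hsq : a ^ 2 + b ^ 2 = 1 / g₃ := by linear_combination a * ha - hre
    have hcval : c * g₃ = g₂ - g₃ := by rw [hc]; exact div_mul_cancel₀ _ hg₃'
    have hg2 : g₂ = g₃ * (1 - 2 * a) := by nlinarith [hcval, ha]
    have h12a : (1 : ℝ) - 2 * a ≠ 0 := by
      intro h; apply hg₂; rw [hg2, h, mul_zero]
    have h1 : (a + 1/g₂)^2 + b^2 = a^2 + b^2 + 2*a/g₂ + (1/g₂)^2 := by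
      field_simp; ring
    rw [h1, hsq, hg2]
    field_simp
    ring
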